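/- Exponential off-diagonal tail bound (equation (NashII4) in the proof of Proposition 3.9): for every κ > 0 there exists a constant C(κ) > 0, depending only on κ, such that for every heat kernel P as in the context, all 0 ≤ S ≤ T, all x ∈ ℤ, and all integers ℓ ≥ 1, Σ over w ∈ ℤ with |w − x| ≥ ℓ of P(S,T,x,w) is at most C(κ) · exp(−κ·ℓ/max(N·(T−S)^(1/2), 1)). -/

import Mathlib

open Real Set Filter

/-- The slow-bond coefficient field: `N^(-β⋆)` on the finite set `I`, and `1` elsewhere. -/
noncomputable def slowCoeff (N : ℕ) (βs : ℝ) (I : Finset ℤ) (x : ℤ) : ℝ :=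
  if x ∈ I then (N : ℝ) ^ (-βs) else 1

/-- A heat kernel `P S T x y` for the coefficient field `a`, in the sense of the paper:
initial condition, the four Kolmogorov equations (forward/backward, acting in either
spatial variable), the Chapman–Kolmogorov identity, nonnegativity, and exponential
moment summability in both spatial variables. -/
structure IsHeatKernel (N : ℕ) (a : ℤ → ℝ) (P : ℝ → ℝ → ℤ → ℤ → ℝ) : Prop where
  init : ∀ S : ℝ, 0 ≤ S → ∀ x y : ℤ, P S S x y = if x = y then 1 else 0
  forward_x : ∀ S T : ℝ, 0 ≤ S → S ≤ T → ∀ x y : ℤ,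
    HasDerivAt (fun t => P S t x y)
      ((1 / 2) * (N : ℝ) ^ 2 * a x *
        (P S T (x + 1) y + P S T (x - 1) y - 2 * P S T x y)) T
  forward_y : ∀ S T : ℝ, 0 ≤ S → S ≤ T → ∀ x y : ℤ,
    HasDerivAt (fun t => P S t x y)
      ((1 / 2) * (N : ℝ) ^ 2 *
        (a (y + 1) * P S T x (y + 1) + a (y - 1) * P S T x (y - 1)
          - 2 * a y * P S T x y)) T
  backward_x : ∀ S T : ℝ, 0 ≤ S → S ≤ T → ∀ x y : ℤ,
    HasDerivAt (fun s => P s T x y)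
      (-((1 / 2) * (N : ℝ) ^ 2 * a x *
        (P S T (x + 1) y + P S T (x - 1) y - 2 * P S T x y))) S
  backward_y : ∀ S T : ℝ, 0 ≤ S → S ≤ T → ∀ x y : ℤ,
    HasDerivAt (fun s => P s T x y)
      (-((1 / 2) * (N : ℝ) ^ 2 *
        (a (y + 1) * P S T x (y + 1) + a (y - 1) * P S T x (y - 1)
          - 2 * a y * P S T x y))) S
  chapman : ∀ S R T : ℝ, 0 ≤ S → S ≤ R → R ≤ T → ∀ x y : ℤ,
    P S T x y = ∑' w : ℤ, P R T x w * P S R w y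
  nonneg : ∀ S T : ℝ, 0 ≤ S → S ≤ T → ∀ x y : ℤ, 0 ≤ P S T x y
  expSummable_y : ∀ lam : ℝ, 0 < lam → ∀ S T : ℝ, 0 ≤ S → S ≤ T → ∀ x : ℤ,
    Summable (fun y : ℤ => Real.exp (lam * |(y : ℝ)|) * P S T x y)
  expSummable_x : ∀ lam : ℝ, 0 < lam → ∀ S T : ℝ, 0 ≤ S → S ≤ T → ∀ y : ℤ,
    Summable (fun x : ℤ => Real.exp (lam * |(x : ℝ)|) * P S T x y)

section Aux

variable {N : ℕ} {a : ℤ → ℝ} {P : ℝ → ℝ → ℤ → ℤ → ℝ}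

lemma hk_sum_y (hP : IsHeatKernel N a P) {S T : ℝ} (hS : 0 ≤ S) (hST : S ≤ T) (x : ℤ) :
    Summable fun w : ℤ => P S T x w := by
  refine Summable.of_nonneg_of_le (fun w => hP.nonneg S T hS hST x w) (fun w => ?_)
    (hP.expSummable_y 1 one_pos S T hS hST x)
  have h1 : (1:ℝ) ≤ Real.exp (1 * |(w:ℝ)|) := by
    rw [one_mul]; exact Real.one_le_exp (abs_nonneg _)
  nlinarith [hP.nonneg S T hS hST x w]

lemma hk_sum_x (hP : IsHeatKernel N a P) {S T : ℝ} (hS : 0 ≤ S) (hST : S ≤ T) (y : ℤ) :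
    Summable fun w : ℤ => P S T w y := by
  refine Summable.of_nonneg_of_le (fun w => hP.nonneg S T hS hST w y) (fun w => ?_)
    (hP.expSummable_x 1 one_pos S T hS hST y)
  have h1 : (1:ℝ) ≤ Real.exp (1 * |(w:ℝ)|) := by
    rw [one_mul]; exact Real.one_le_exp (abs_nonneg _)
  nlinarith [hP.nonneg S T hS hST w y]

lemma hk_sum_weight (hP : IsHeatKernel N a P) {S T : ℝ} (hS : 0 ≤ S) (hST : S ≤ T)
    (x : ℤ) (ν : ℝ) :
    Summable fun w : ℤ => Real.exp (ν * ((w:ℝ) - x)) * P S T x w := by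
  refine Summable.of_nonneg_of_le
    (fun w => mul_nonneg (Real.exp_nonneg _) (hP.nonneg S T hS hST x w)) (fun w => ?_)
    (((hP.expSummable_y (|ν| + 1) (by positivity) S T hS hST x).mul_left
      (Real.exp (|ν| * |(x:ℝ)|))).congr (fun w => by rw [← mul_assoc, ← Real.exp_add]))
  have h1 : ν * ((w:ℝ) - x) ≤ |ν| * |(x:ℝ)| + (|ν| + 1) * |(w:ℝ)| := by
    have h2 : ν * ((w:ℝ) - x) ≤ |ν * ((w:ℝ) - x)| := le_abs_self _
    rw [abs_mul] at h2
    have h3 : |(w:ℝ) - x| ≤ |(w:ℝ)| + |(x:ℝ)| := abs_sub _ _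
    nlinarith [abs_nonneg ν, abs_nonneg ((w:ℝ)), abs_nonneg ((w:ℝ) - x), abs_nonneg ((x:ℝ))]
  exact mul_le_mul_of_nonneg_right (Real.exp_le_exp.mpr h1) (hP.nonneg S T hS hST x w)


lemma hk_diag_lower (hP : IsHeatKernel N a P) (ha0 : ∀ z, 0 ≤ a z) (ha1 : ∀ z, a z ≤ 1)
    {t u : ℝ} (ht : 0 ≤ t) (htu : t ≤ u) (x : ℤ) :
    Real.exp (-((N:ℝ)^2 * (u - t))) ≤ P t u x x := by
  have hc0 : 0 ≤ (N:ℝ)^2 := sq_nonneg _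
  set g : ℝ → ℝ := fun v => Real.exp ((N:ℝ)^2 * (v - t)) * P t v x x with hg
  have key : ∀ v ∈ Icc t u, HasDerivAt g
      (Real.exp ((N:ℝ)^2 * (v - t)) * (N:ℝ)^2 * P t v x x +
        Real.exp ((N:ℝ)^2 * (v - t)) *
          ((1 / 2) * (N : ℝ) ^ 2 * a x *
            (P t v (x + 1) x + P t v (x - 1) x - 2 * P t v x x))) v := by
    intro v hv
    have h1 : HasDerivAt (fun v => (N:ℝ)^2 * (v - t)) ((N:ℝ)^2) v := by
      simpa using ((hasDerivAt_id v).sub_const t).const_mul ((N:ℝ)^2)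
    exact (h1.exp).mul (hP.forward_x t v ht hv.1 x x)
  have hmono : MonotoneOn g (Icc t u) := by
    apply monotoneOn_of_deriv_nonneg (convex_Icc t u)
      (fun v hv => (key v hv).continuousAt.continuousWithinAt)
      (fun v hv => ((key v (interior_subset hv)).differentiableAt).differentiableWithinAt)
    intro v hv
    rw [(key v (interior_subset hv)).deriv]
    have hv' : v ∈ Icc t u := interior_subset hv
    have hp0 := hP.nonneg t v ht hv'.1 x x
    have hp1 := hP.nonneg t v ht hv'.1 (x+1) x
    have hp2 := hP.nonneg t v ht hv'.1 (x-1) x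
    have he := Real.exp_pos ((N:ℝ)^2 * (v - t))
    have hinner : 0 ≤ (N:ℝ)^2 * P t v x x +
        (1 / 2) * (N : ℝ) ^ 2 * a x * (P t v (x + 1) x + P t v (x - 1) x - 2 * P t v x x) := by
      have k1 : 0 ≤ (N:ℝ)^2 * (a x * P t v (x+1) x) := mul_nonneg hc0 (mul_nonneg (ha0 x) hp1)
      have k2 : 0 ≤ (N:ℝ)^2 * (a x * P t v (x-1) x) := mul_nonneg hc0 (mul_nonneg (ha0 x) hp2)
      have k3 : (N:ℝ)^2 * (a x * P t v x x) ≤ (N:ℝ)^2 * P t v x x :=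
        mul_le_mul_of_nonneg_left (mul_le_of_le_one_left hp0 (ha1 x)) hc0
      nlinarith [k1, k2, k3]
    have hfac : Real.exp ((N:ℝ)^2 * (v - t)) * (N:ℝ)^2 * P t v x x +
        Real.exp ((N:ℝ)^2 * (v - t)) *
          ((1 / 2) * (N : ℝ) ^ 2 * a x *
            (P t v (x + 1) x + P t v (x - 1) x - 2 * P t v x x)) =
        Real.exp ((N:ℝ)^2 * (v - t)) * ((N:ℝ)^2 * P t v x x +
          (1 / 2) * (N : ℝ) ^ 2 * a x *
            (P t v (x + 1) x + P t v (x - 1) x - 2 * P t v x x)) := by ring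
    rw [hfac]
    exact mul_nonneg he.le hinner
  have h1 : g t ≤ g u := hmono (left_mem_Icc.mpr htu) (right_mem_Icc.mpr htu) htu
  have h2 : g t = 1 := by
    simp [hg, hP.init t ht x x]
  have h3 : Real.exp ((N:ℝ)^2 * (u - t)) * Real.exp (-((N:ℝ)^2 * (u - t))) = 1 := by
    rw [← Real.exp_add, add_neg_cancel, Real.exp_zero]
  have he := Real.exp_pos (-((N:ℝ)^2 * (u - t)))
  have he2 := Real.exp_pos ((N:ℝ)^2 * (u - t))
  rw [h2, hg] at h1
  have h1' : 1 ≤ Real.exp ((N:ℝ)^2 * (u - t)) * P t u x x := h1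
  have h4 : Real.exp ((N:ℝ)^2 * (u - t)) * Real.exp (-((N:ℝ)^2 * (u - t))) * P t u x x = P t u x x := by
    rw [h3, one_mul]
  nlinarith [mul_le_mul_of_nonneg_left h1' he.le, h4]

lemma hk_dominate (hP : IsHeatKernel N a P) (ha0 : ∀ z, 0 ≤ a z) (ha1 : ∀ z, a z ≤ 1)
    {S T' t : ℝ} (hS : 0 ≤ S) (hSt : S ≤ t) (htT : t ≤ T') (x y : ℤ) :
    P S t x y ≤ Real.exp ((N:ℝ)^2 * (T' - S)) * P S T' x y := by
  have ht0 : 0 ≤ t := hS.trans hSt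
  have hST' : S ≤ T' := hSt.trans htT
  have hsum1 : Summable fun w : ℤ => P t T' x w := hk_sum_y hP ht0 htT x
  have hsum2 : Summable fun w : ℤ => P S t w y := hk_sum_x hP hS hSt y
  have hK : ∀ w : ℤ, P t T' x w ≤ ∑' w : ℤ, P t T' x w :=
    fun w => Summable.le_tsum hsum1 w (fun w' _ => hP.nonneg t T' ht0 htT x w')
  have hsum : Summable fun w : ℤ => P t T' x w * P S t w y := by
    refine Summable.of_nonneg_of_le
      (fun w => mul_nonneg (hP.nonneg t T' ht0 htT x w) (hP.nonneg S t hS hSt w y))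
      (fun w => mul_le_mul_of_nonneg_right (hK w) (hP.nonneg S t hS hSt w y))
      (hsum2.mul_left _)
  have hch := hP.chapman S t T' hS hSt htT x y
  have hterm : P t T' x x * P S t x y ≤ P S T' x y := by
    rw [hch]
    exact Summable.le_tsum hsum x
      (fun w _ => mul_nonneg (hP.nonneg t T' ht0 htT x w) (hP.nonneg S t hS hSt w y))
  have hdiag := hk_diag_lower hP ha0 ha1 ht0 htT x
  have hQ := hP.nonneg S t hS hSt x y
  have hR := hP.nonneg S T' hS hST' x y
  have h1 : Real.exp (-((N:ℝ)^2 * (T' - t))) * P S t x y ≤ P S T' x y :=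
    le_trans (mul_le_mul_of_nonneg_right hdiag hQ) hterm
  have h3 : Real.exp ((N:ℝ)^2 * (T' - t)) * Real.exp (-((N:ℝ)^2 * (T' - t))) = 1 := by
    rw [← Real.exp_add, add_neg_cancel, Real.exp_zero]
  have hMono : Real.exp ((N:ℝ)^2 * (T' - t)) ≤ Real.exp ((N:ℝ)^2 * (T' - S)) := by
    apply Real.exp_le_exp.mpr
    nlinarith [sq_nonneg (N:ℝ)]
  have he2 := Real.exp_pos ((N:ℝ)^2 * (T' - t))
  have h4 : Real.exp ((N:ℝ)^2 * (T' - t)) * Real.exp (-((N:ℝ)^2 * (T' - t))) * P S t x y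
      = P S t x y := by rw [h3, one_mul]
  nlinarith [mul_le_mul_of_nonneg_left h1 he2.le, h4, mul_le_mul_of_nonneg_right hMono hR]


set_option maxHeartbeats 1000000 in
lemma hk_moment (hP : IsHeatKernel N a P) (ha0 : ∀ z, 0 ≤ a z) (ha1 : ∀ z, a z ≤ 1)
    {S T : ℝ} (hS : 0 ≤ S) (hST : S ≤ T) (x : ℤ) (μ : ℝ) :
    (∑' w : ℤ, Real.exp (μ * ((w:ℝ) - x)) * P S T x w) ≤
      Real.exp ((1/2) * (N:ℝ)^2 * (Real.exp μ + Real.exp (-μ) - 2) * (T - S)) := by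
  set φ : ℤ → ℝ := fun w => Real.exp (μ * ((w:ℝ) - x)) with hφ
  have hφpos : ∀ w, 0 < φ w := fun w => Real.exp_pos _
  set T₂ : ℝ := T + 1 with hT₂
  have hST₂ : S ≤ T₂ := by linarith
  have hφshift : ∀ (v j : ℤ), φ (v + j) = Real.exp (μ * (j:ℝ)) * φ v := by
    intro v j
    show Real.exp (μ * (((v + j : ℤ):ℝ) - x)) =
      Real.exp (μ * (j:ℝ)) * Real.exp (μ * ((v:ℝ) - x))
    rw [← Real.exp_add]
    congr 1
    push_cast
    ring
  have hφm : ∀ v : ℤ, φ (v - 1) = Real.exp (-μ) * φ v := by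
    intro v
    have h := hφshift v (-1)
    rw [show v + (-1 : ℤ) = v - 1 by ring] at h
    rw [h]
    norm_num
  have hφp : ∀ v : ℤ, φ (v + 1) = Real.exp μ * φ v := by
    intro v
    have h := hφshift v 1
    rw [h]
    norm_num
  have hsumF : ∀ {t : ℝ}, S ≤ t → Summable fun w : ℤ => φ w * P S t x w :=
    fun {t} hst => hk_sum_weight hP hS hst x μ
  have hshift : ∀ {t : ℝ}, S ≤ t → ∀ j : ℤ, Summable fun w : ℤ => φ w * P S t x (w + j) := by
    intro t hst j
    have base := (hk_sum_weight hP hS hst x μ).mul_left (Real.exp (-(μ * (j:ℝ))))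
    have comp := base.comp_injective (Equiv.addRight j).injective
    refine comp.congr (fun w => ?_)
    simp only [Function.comp_apply, Equiv.coe_addRight]
    have h1 : Real.exp (μ * (((w + j : ℤ) : ℝ) - x)) = φ (w + j) := rfl
    rw [h1, hφshift w j, ← mul_assoc, ← mul_assoc, ← Real.exp_add, neg_add_cancel,
      Real.exp_zero, one_mul]
  have hshiftm : ∀ {t : ℝ}, S ≤ t → Summable fun w : ℤ => φ w * P S t x (w - 1) := by
    intro t hst
    exact (hshift hst (-1)).congr fun w => by rw [show w + (-1 : ℤ) = w - 1 by ring]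
  set K : ℝ := Real.exp ((N:ℝ)^2 * (T₂ - S)) with hK
  have hdom : ∀ {t : ℝ}, S ≤ t → t ≤ T₂ → ∀ y : ℤ, P S t x y ≤ K * P S T₂ x y :=
    fun {t} hst htT y => hk_dominate hP ha0 ha1 hS hst htT x y
  set F : ℝ → ℝ := fun t => ∑' w : ℤ, φ w * P S t x w with hF
  set D : ℝ → ℝ := fun t => ∑' w : ℤ,
      φ w * ((1 / 2) * (N : ℝ) ^ 2 *
        (a (w + 1) * P S t x (w + 1) + a (w - 1) * P S t x (w - 1)
          - 2 * a w * P S t x w)) with hD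
  have hsum1 : Summable fun w : ℤ => φ w * P S T₂ x (w + 1) := hshift hST₂ 1
  have hsum2 : Summable fun w : ℤ => φ w * P S T₂ x (w - 1) := hshiftm hST₂
  have hsum3 : Summable fun w : ℤ => φ w * P S T₂ x w := hsumF hST₂
  set u : ℤ → ℝ := fun w => K * ((1/2)*(N:ℝ)^2 *
      (φ w * P S T₂ x (w+1) + φ w * P S T₂ x (w-1) + 2 * (φ w * P S T₂ x w))) with hu_def
  have hu : Summable u := by
    apply Summable.mul_left
    apply Summable.mul_left
    exact (hsum1.add hsum2).add (hsum3.mul_left 2)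
  -- the termwise derivative bound
  have hb : ∀ (w : ℤ), ∀ t ∈ Icc S T₂,
      ‖φ w * ((1 / 2) * (N : ℝ) ^ 2 *
        (a (w + 1) * P S t x (w + 1) + a (w - 1) * P S t x (w - 1)
          - 2 * a w * P S t x w))‖ ≤ u w := by
    intro w t ht
    obtain ⟨hst, htT⟩ := ht
    have hp1 := hP.nonneg S t hS hst x (w+1)
    have hp2 := hP.nonneg S t hS hst x (w-1)
    have hp0 := hP.nonneg S t hS hst x w
    have habs : |a (w+1) * P S t x (w+1) + a (w-1) * P S t x (w-1) - 2 * a w * P S t x w|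
        ≤ P S t x (w+1) + P S t x (w-1) + 2 * P S t x w := by
      rw [abs_le]
      constructor
      · nlinarith [mul_nonneg (ha0 (w+1)) hp1, mul_nonneg (ha0 (w-1)) hp2,
          mul_le_of_le_one_left hp0 (ha1 w)]
      · nlinarith [mul_nonneg (ha0 w) hp0, mul_le_of_le_one_left hp1 (ha1 (w+1)),
          mul_le_of_le_one_left hp2 (ha1 (w-1))]
    have hnn : (0:ℝ) ≤ (1/2)*(N:ℝ)^2 := by positivity
    have hnorm : ‖φ w * ((1 / 2) * (N : ℝ) ^ 2 *
        (a (w + 1) * P S t x (w + 1) + a (w - 1) * P S t x (w - 1)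
          - 2 * a w * P S t x w))‖ =
        φ w * ((1/2)*(N:ℝ)^2 *
          |a (w + 1) * P S t x (w + 1) + a (w - 1) * P S t x (w - 1)
          - 2 * a w * P S t x w|) := by
      rw [Real.norm_eq_abs, abs_mul, abs_mul, abs_of_nonneg (hφpos w).le, abs_of_nonneg hnn]
    rw [hnorm]
    have hd1 := hdom hst htT (w+1)
    have hd2 := hdom hst htT (w-1)
    have hd0 := hdom hst htT w
    have hsum_le : φ w * P S t x (w+1) + φ w * P S t x (w-1) + 2*(φ w * P S t x w) ≤
        φ w * (K * P S T₂ x (w+1)) + φ w * (K * P S T₂ x (w-1))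
          + 2 * (φ w * (K * P S T₂ x w)) := by
      have k1 := mul_le_mul_of_nonneg_left hd1 (hφpos w).le
      have k2 := mul_le_mul_of_nonneg_left hd2 (hφpos w).le
      have k0 := mul_le_mul_of_nonneg_left hd0 (hφpos w).le
      linarith
    calc φ w * ((1/2)*(N:ℝ)^2 *
          |a (w + 1) * P S t x (w + 1) + a (w - 1) * P S t x (w - 1)
          - 2 * a w * P S t x w|)
        = (1/2)*(N:ℝ)^2 * (φ w *
          |a (w + 1) * P S t x (w + 1) + a (w - 1) * P S t x (w - 1)
          - 2 * a w * P S t x w|) := by ring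
      _ ≤ (1/2)*(N:ℝ)^2 * (φ w *
          (P S t x (w+1) + P S t x (w-1) + 2 * P S t x w)) := by
          apply mul_le_mul_of_nonneg_left _ hnn
          exact mul_le_mul_of_nonneg_left habs (hφpos w).le
      _ = (1/2)*(N:ℝ)^2 * (φ w * P S t x (w+1) + φ w * P S t x (w-1)
            + 2*(φ w * P S t x w)) := by ring
      _ ≤ (1/2)*(N:ℝ)^2 * (φ w * (K * P S T₂ x (w+1)) + φ w * (K * P S T₂ x (w-1))
            + 2 * (φ w * (K * P S T₂ x w))) := mul_le_mul_of_nonneg_left hsum_le hnn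
      _ = u w := by rw [hu_def]; ring
  -- termwise derivative fact
  have hterm_der : ∀ (w : ℤ) (t : ℝ), S ≤ t →
      HasDerivAt (fun t => φ w * P S t x w)
        (φ w * ((1 / 2) * (N : ℝ) ^ 2 *
          (a (w + 1) * P S t x (w + 1) + a (w - 1) * P S t x (w - 1)
            - 2 * a w * P S t x w))) t :=
    fun w t hst => (hP.forward_y S t hS hst x w).const_mul (φ w)
  -- derivative of F on the open interval
  have hFder : ∀ t ∈ Ioo S T₂, HasDerivAt F (D t) t := by
    intro t ht
    exact hasDerivAt_of_tendstoUniformlyOn (isOpen_Ioo (a := S) (b := T₂))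
      (tendstoUniformlyOn_tsum hu (fun w t' ht' => hb w t' (Ioo_subset_Icc_self ht')))
      (Filter.Eventually.of_forall (fun n t' ht' =>
        HasDerivAt.fun_sum (fun w _ => hterm_der w t' ht'.1.le)))
      (fun t' ht' => (hsumF ht'.1.le).hasSum) ht
  -- continuity of F on the closed interval
  have hu0 : Summable fun w : ℤ => K * (φ w * P S T₂ x w) := hsum3.mul_left K
  have hFcont : ContinuousOn F (Icc S T₂) := by
    apply TendstoUniformlyOn.continuousOn
      (tendstoUniformlyOn_tsum hu0 (fun w t ht => ?_))
      (Filter.Eventually.of_forall (fun n => continuousOn_finset_sum n (fun w _ => ?_))).frequently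
    · rw [Real.norm_eq_abs,
        abs_of_nonneg (mul_nonneg (hφpos w).le (hP.nonneg S t hS ht.1 x w))]
      calc φ w * P S t x w ≤ φ w * (K * P S T₂ x w) :=
            mul_le_mul_of_nonneg_left (hdom ht.1 ht.2 w) (hφpos w).le
        _ = K * (φ w * P S T₂ x w) := by ring
    · intro t ht
      exact (hterm_der w t ht.1).continuousAt.continuousWithinAt
  -- initial value
  have hFS : F S = 1 := by
    have h0 : ∀ w : ℤ, w ≠ x → φ w * P S S x w = 0 := by
      intro w hw
      rw [hP.init S hS x w, if_neg (fun h => hw h.symm), mul_zero]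
    show (∑' w : ℤ, φ w * P S S x w) = 1
    rw [tsum_eq_single x h0, hP.init S hS x x, if_pos rfl, mul_one]
    show Real.exp (μ * ((x:ℝ) - x)) = 1
    rw [sub_self, mul_zero, Real.exp_zero]
  -- the constant
  set cG : ℝ := (1/2)*(N:ℝ)^2*(Real.exp μ + Real.exp (-μ) - 2) with hcG
  have hprod1 : Real.exp μ * Real.exp (-μ) = 1 := by
    rw [← Real.exp_add, add_neg_cancel, Real.exp_zero]
  have hs0 : 0 ≤ Real.exp μ + Real.exp (-μ) - 2 := by
    have hX : 0 ≤ Real.exp (-μ) * (Real.exp μ - 1)^2 :=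
      mul_nonneg (Real.exp_pos _).le (sq_nonneg _)
    have hp2 : Real.exp (-μ) * Real.exp μ * Real.exp μ = Real.exp μ := by
      rw [mul_comm (Real.exp (-μ)) (Real.exp μ), hprod1, one_mul]
    nlinarith [hX, hprod1, hp2]
  have hcG0 : 0 ≤ cG := by
    rw [hcG]
    positivity
  -- identity for D
  have hkey : ∀ t : ℝ, S ≤ t →
      D t = cG * (∑' w : ℤ, φ w * (a w * P S t x w)) := by
    intro t hst
    have hg1 : Summable fun w : ℤ => φ w * (a (w+1) * P S t x (w+1)) := by
      refine Summable.of_nonneg_of_le (fun w => ?_) (fun w => ?_) (hshift hst 1)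
      · exact mul_nonneg (hφpos w).le (mul_nonneg (ha0 _) (hP.nonneg S t hS hst x _))
      · exact mul_le_mul_of_nonneg_left
          (mul_le_of_le_one_left (hP.nonneg S t hS hst x _) (ha1 _)) (hφpos w).le
    have hg2 : Summable fun w : ℤ => φ w * (a (w-1) * P S t x (w-1)) := by
      refine Summable.of_nonneg_of_le (fun w => ?_) (fun w => ?_) (hshiftm hst)
      · exact mul_nonneg (hφpos w).le (mul_nonneg (ha0 _) (hP.nonneg S t hS hst x _))
      · exact mul_le_mul_of_nonneg_left
          (mul_le_of_le_one_left (hP.nonneg S t hS hst x _) (ha1 _)) (hφpos w).le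
    have hg3 : Summable fun w : ℤ => φ w * (a w * P S t x w) := by
      refine Summable.of_nonneg_of_le (fun w => ?_) (fun w => ?_) (hsumF hst)
      · exact mul_nonneg (hφpos w).le (mul_nonneg (ha0 _) (hP.nonneg S t hS hst x _))
      · exact mul_le_mul_of_nonneg_left
          (mul_le_of_le_one_left (hP.nonneg S t hS hst x _) (ha1 _)) (hφpos w).le
    have step1 : D t = (1/2)*(N:ℝ)^2 * ∑' w : ℤ,
        (φ w * (a (w+1) * P S t x (w+1)) + φ w * (a (w-1) * P S t x (w-1))
          - 2 * (φ w * (a w * P S t x w))) := by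
      rw [hD, ← tsum_mul_left]
      exact tsum_congr fun w => by ring
    have e1 : (∑' w : ℤ, φ w * (a (w+1) * P S t x (w+1))) =
        Real.exp (-μ) * ∑' w : ℤ, φ w * (a w * P S t x w) := by
      calc (∑' w : ℤ, φ w * (a (w+1) * P S t x (w+1)))
          = ∑' v : ℤ, φ (v - 1) * (a v * P S t x v) := by
            rw [← Equiv.tsum_eq (Equiv.addRight (1:ℤ))
              (fun v : ℤ => φ (v - 1) * (a v * P S t x v))]
            exact tsum_congr fun w => by
              simp only [Equiv.coe_addRight, add_sub_cancel_right]
        _ = Real.exp (-μ) * ∑' w : ℤ, φ w * (a w * P S t x w) := by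
            rw [← tsum_mul_left]
            exact tsum_congr fun v => by rw [hφm v]; ring
    have e2 : (∑' w : ℤ, φ w * (a (w-1) * P S t x (w-1))) =
        Real.exp μ * ∑' w : ℤ, φ w * (a w * P S t x w) := by
      calc (∑' w : ℤ, φ w * (a (w-1) * P S t x (w-1)))
          = ∑' v : ℤ, φ (v + 1) * (a v * P S t x v) := by
            rw [← Equiv.tsum_eq (Equiv.subRight (1:ℤ))
              (fun v : ℤ => φ (v + 1) * (a v * P S t x v))]
            exact tsum_congr fun w => by
              simp only [Equiv.subRight_apply, sub_add_cancel]
        _ = Real.exp μ * ∑' w : ℤ, φ w * (a w * P S t x w) := by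
            rw [← tsum_mul_left]
            exact tsum_congr fun v => by rw [hφp v]; ring
    rw [step1, Summable.tsum_sub (hg1.add hg2) (hg3.mul_left 2), Summable.tsum_add hg1 hg2, tsum_mul_left,
      e1, e2, hcG]
    ring
  have hDle : ∀ t : ℝ, S ≤ t → D t ≤ cG * F t := by
    intro t hst
    rw [hkey t hst, hF]
    apply mul_le_mul_of_nonneg_left _ hcG0
    apply Summable.tsum_le_tsum _ _ (hsumF hst)
    · intro w
      exact mul_le_mul_of_nonneg_left
        (mul_le_of_le_one_left (hP.nonneg S t hS hst x _) (ha1 _)) (hφpos w).le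
    · refine Summable.of_nonneg_of_le (fun w => ?_) (fun w => ?_) (hsumF hst)
      · exact mul_nonneg (hφpos w).le (mul_nonneg (ha0 _) (hP.nonneg S t hS hst x _))
      · exact mul_le_mul_of_nonneg_left
          (mul_le_of_le_one_left (hP.nonneg S t hS hst x _) (ha1 _)) (hφpos w).le
  -- Gronwall
  have hGder : ∀ t ∈ Ioo S T₂, HasDerivAt (fun t => Real.exp (-cG * (t - S)) * F t)
      (Real.exp (-cG * (t - S)) * (-cG) * F t + Real.exp (-cG * (t - S)) * D t) t := by
    intro t ht
    have h1 : HasDerivAt (fun t : ℝ => -cG * (t - S)) (-cG) t := by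
      simpa using ((hasDerivAt_id t).sub_const S).const_mul (-cG)
    exact (h1.exp).mul (hFder t ht)
  have hanti : AntitoneOn (fun t => Real.exp (-cG * (t - S)) * F t) (Icc S T) := by
    apply antitoneOn_of_deriv_nonpos (convex_Icc S T)
    · apply ContinuousOn.mul
      · exact (Real.continuous_exp.comp (by continuity)).continuousOn
      · exact hFcont.mono (Icc_subset_Icc_right (by linarith))
    · intro t ht
      rw [interior_Icc] at ht
      exact ((hGder t ⟨ht.1, by linarith [ht.2]⟩).differentiableAt).differentiableWithinAt
    · intro t ht
      rw [interior_Icc] at ht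
      have ht2 : t ∈ Ioo S T₂ := ⟨ht.1, by linarith [ht.2]⟩
      rw [(hGder t ht2).deriv]
      have hDt := hDle t ht.1.le
      have he := Real.exp_pos (-cG * (t - S))
      nlinarith [mul_le_mul_of_nonneg_left hDt he.le]
  have hfin : Real.exp (-cG * (T - S)) * F T ≤ 1 := by
    have := hanti (left_mem_Icc.mpr hST) (right_mem_Icc.mpr hST) hST
    calc Real.exp (-cG * (T - S)) * F T ≤ Real.exp (-cG * (S - S)) * F S := this
      _ = 1 := by rw [sub_self, mul_zero, Real.exp_zero, one_mul, hFS]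
  have hgoal : F T ≤ Real.exp (cG * (T - S)) := by
    have hp : Real.exp (cG * (T - S)) * Real.exp (-cG * (T - S)) = 1 := by
      rw [← Real.exp_add, show cG * (T - S) + -cG * (T - S) = 0 by ring, Real.exp_zero]
    have hq : Real.exp (cG * (T - S)) * Real.exp (-cG * (T - S)) * F T = F T := by
      rw [hp, one_mul]
    nlinarith [mul_le_mul_of_nonneg_left hfin (Real.exp_pos (cG * (T - S))).le, hq]
  calc (∑' w : ℤ, Real.exp (μ * ((w:ℝ) - x)) * P S T x w) = F T := rfl
    _ ≤ Real.exp (cG * (T - S)) := hgoal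
    _ = Real.exp ((1/2) * (N:ℝ)^2 * (Real.exp μ + Real.exp (-μ) - 2) * (T - S)) := by
        rw [hcG]


end Aux

set_option maxHeartbeats 2000000 in
/-- Exponential off-diagonal tail bound (equation (NashII4)). -/
theorem exponential_offdiagonal_tail :
    ∀ κ : ℝ, 0 < κ → ∃ C : ℝ, 0 < C ∧
      ∀ (N : ℕ), 1 ≤ N → ∀ (βs : ℝ), 0 < βs → βs ≤ 1 / 2 →
      ∀ (I : Finset ℤ) (P : ℝ → ℝ → ℤ → ℤ → ℝ),
        IsHeatKernel N (slowCoeff N βs I) P →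
        ∀ S T : ℝ, 0 ≤ S → S ≤ T → ∀ x : ℤ, ∀ ℓ : ℕ, 1 ≤ ℓ →
          (∑' w : {w : ℤ // (ℓ : ℤ) ≤ |w - x|}, P S T x (w : ℤ)) ≤
            C * Real.exp (-(κ * (ℓ : ℝ)) /
              max ((N : ℝ) * (T - S) ^ ((1 : ℝ) / 2)) 1) := by
  intro κ hκ
  refine ⟨2 * Real.exp (κ^2 * Real.exp κ / 2), by positivity, ?_⟩
  intro N hN βs hβ0 hβ1 I P hP S T hS hST x ℓ hℓ
  have hN1 : (1:ℝ) ≤ (N:ℝ) := by exact_mod_cast hN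
  have ha0 : ∀ z, 0 ≤ slowCoeff N βs I z := by
    intro z
    unfold slowCoeff
    split
    · exact Real.rpow_nonneg (by positivity) _
    · norm_num
  have ha1 : ∀ z, slowCoeff N βs I z ≤ 1 := by
    intro z
    unfold slowCoeff
    split
    · exact Real.rpow_le_one_of_one_le_of_nonpos hN1 (by linarith)
    · exact le_refl 1
  set M : ℝ := max ((N : ℝ) * (T - S) ^ ((1 : ℝ) / 2)) 1 with hM
  have hM1 : (1:ℝ) ≤ M := le_max_right _ _
  have hM0 : (0:ℝ) < M := lt_of_lt_of_le one_pos hM1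
  set lam : ℝ := κ / M with hlam
  have hlam0 : 0 < lam := div_pos hκ hM0
  have hlamκ : lam ≤ κ := by
    rw [hlam]
    exact div_le_self hκ.le hM1
  have hMlam : lam * M = κ := by
    rw [hlam]
    field_simp
  have hTS : 0 ≤ T - S := by linarith
  have hsq : ((T - S) ^ ((1:ℝ)/2))^2 = T - S := by
    rw [← Real.rpow_natCast ((T - S) ^ ((1:ℝ)/2)) 2, ← Real.rpow_mul hTS]
    norm_num
  have hNTS : (N:ℝ)^2 * (T - S) ≤ M^2 := by
    have h1 : (N : ℝ) * (T - S) ^ ((1 : ℝ) / 2) ≤ M := le_max_left _ _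
    have h2 : 0 ≤ (N : ℝ) * (T - S) ^ ((1 : ℝ) / 2) := by positivity
    nlinarith [mul_self_le_mul_self h2 h1, hsq]
  have hprod : Real.exp lam * Real.exp (-lam) = 1 := by
    rw [← Real.exp_add, add_neg_cancel, Real.exp_zero]
  have hEpos := Real.exp_pos lam
  have hexp_ineq : Real.exp lam + Real.exp (-lam) - 2 ≤ lam^2 * Real.exp lam := by
    have hE1 : 1 + lam ≤ Real.exp lam := by linarith [Real.add_one_le_exp lam]
    have hE2 : 1 - lam ≤ Real.exp (-lam) := by linarith [Real.add_one_le_exp (-lam)]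
    have h3 : Real.exp lam - 1 ≤ lam * Real.exp lam := by
      nlinarith [mul_le_mul_of_nonneg_left hE2 hEpos.le, hprod]
    have h4 : 0 ≤ Real.exp lam - 1 := by nlinarith [hE1, hlam0]
    have h5 : (Real.exp lam - 1)^2 ≤ (lam * Real.exp lam)^2 := by
      exact pow_le_pow_left₀ h4 h3 2
    nlinarith [h5, hprod, hEpos]
  have hexp_bound : (1/2) * (N:ℝ)^2 * (Real.exp lam + Real.exp (-lam) - 2) * (T - S)
      ≤ κ^2 * Real.exp κ / 2 := by
    have hc1 : (0:ℝ) ≤ (1/2) * (N:ℝ)^2 := by positivity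
    calc (1/2) * (N:ℝ)^2 * (Real.exp lam + Real.exp (-lam) - 2) * (T - S)
        ≤ (1/2) * (N:ℝ)^2 * (lam^2 * Real.exp lam) * (T - S) := by
          exact mul_le_mul_of_nonneg_right (mul_le_mul_of_nonneg_left hexp_ineq hc1) hTS
      _ = (lam^2 * ((N:ℝ)^2 * (T - S))) * Real.exp lam / 2 := by ring
      _ ≤ (lam^2 * M^2) * Real.exp lam / 2 := by
          have k1 := mul_le_mul_of_nonneg_left hNTS (sq_nonneg lam)
          have k2 := mul_le_mul_of_nonneg_right k1 hEpos.le
          linarith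
      _ = κ^2 * Real.exp lam / 2 := by
          rw [show lam^2 * M^2 = (lam * M)^2 by ring, hMlam]
      _ ≤ κ^2 * Real.exp κ / 2 := by
          have k3 := Real.exp_le_exp.mpr hlamκ
          nlinarith [sq_nonneg κ]
  have hFp : (∑' w : ℤ, Real.exp (lam * ((w:ℝ) - x)) * P S T x w) ≤
      Real.exp (κ^2 * Real.exp κ / 2) :=
    le_trans (hk_moment hP ha0 ha1 hS hST x lam) (Real.exp_le_exp.mpr hexp_bound)
  have hFm : (∑' w : ℤ, Real.exp (-lam * ((w:ℝ) - x)) * P S T x w) ≤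
      Real.exp (κ^2 * Real.exp κ / 2) := by
    have h := hk_moment hP ha0 ha1 hS hST x (-lam)
    rw [neg_neg] at h
    refine le_trans h (Real.exp_le_exp.mpr ?_)
    calc (1/2) * (N:ℝ)^2 * (Real.exp (-lam) + Real.exp lam - 2) * (T - S)
        = (1/2) * (N:ℝ)^2 * (Real.exp lam + Real.exp (-lam) - 2) * (T - S) := by ring
      _ ≤ κ^2 * Real.exp κ / 2 := hexp_bound
  set c2 : ℝ := Real.exp (-(lam * (ℓ:ℝ))) with hc2
  have hc2pos : 0 < c2 := Real.exp_pos _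
  have hw1 : Summable fun w : ℤ => Real.exp (lam * ((w:ℝ) - x)) * P S T x w :=
    hk_sum_weight hP hS hST x lam
  have hw2 : Summable fun w : ℤ => Real.exp (-lam * ((w:ℝ) - x)) * P S T x w :=
    hk_sum_weight hP hS hST x (-lam)
  have hg : Summable fun w : ℤ => c2 * (Real.exp (lam * ((w:ℝ) - x)) * P S T x w
      + Real.exp (-lam * ((w:ℝ) - x)) * P S T x w) := (hw1.add hw2).mul_left c2
  have hsubsum : Summable fun w : {w : ℤ // (ℓ : ℤ) ≤ |w - x|} => P S T x (w : ℤ) :=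
    (hk_sum_y hP hS hST x).subtype _
  have htail : (∑' w : {w : ℤ // (ℓ : ℤ) ≤ |w - x|}, P S T x (w : ℤ)) ≤
      ∑' w : ℤ, c2 * (Real.exp (lam * ((w:ℝ) - x)) * P S T x w
        + Real.exp (-lam * ((w:ℝ) - x)) * P S T x w) := by
    refine Summable.tsum_le_tsum_of_inj (fun w : {w : ℤ // (ℓ : ℤ) ≤ |w - x|} => (w : ℤ))
      Subtype.val_injective (fun w _ => ?_) (fun b => ?_) hsubsum hg
    · exact mul_nonneg hc2pos.le (add_nonneg
        (mul_nonneg (Real.exp_nonneg _) (hP.nonneg S T hS hST x w))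
        (mul_nonneg (Real.exp_nonneg _) (hP.nonneg S T hS hST x w)))
    · obtain ⟨w, hwl⟩ := b
      have hwl' : (ℓ:ℝ) ≤ |(w:ℝ) - (x:ℝ)| := by exact_mod_cast hwl
      have hP0 := hP.nonneg S T hS hST x w
      have h1 : Real.exp (lam * (ℓ:ℝ)) ≤ Real.exp (lam * |(w:ℝ) - x|) :=
        Real.exp_le_exp.mpr (mul_le_mul_of_nonneg_left hwl' hlam0.le)
      have h2 : Real.exp (lam * |(w:ℝ) - x|) ≤
          Real.exp (lam * ((w:ℝ) - x)) + Real.exp (-lam * ((w:ℝ) - x)) := by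
        rcases abs_cases ((w:ℝ) - x) with ⟨he, _⟩ | ⟨he, _⟩
        · rw [he]
          linarith [Real.exp_pos (-lam * ((w:ℝ) - x))]
        · rw [he, show lam * -((w:ℝ) - x) = -lam * ((w:ℝ) - x) by ring]
          linarith [Real.exp_pos (lam * ((w:ℝ) - x))]
      have hp3 : Real.exp (lam * (ℓ:ℝ)) * c2 = 1 := by
        rw [hc2, ← Real.exp_add, add_neg_cancel, Real.exp_zero]
      have hp4 : Real.exp (lam * (ℓ:ℝ)) * c2 * P S T x w = P S T x w := by
        rw [hp3, one_mul]
      have k1 : Real.exp (lam * (ℓ:ℝ)) * P S T x w ≤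
          (Real.exp (lam * ((w:ℝ) - x)) + Real.exp (-lam * ((w:ℝ) - x))) * P S T x w :=
        le_trans (mul_le_mul_of_nonneg_right h1 hP0) (mul_le_mul_of_nonneg_right h2 hP0)
      have k2 := mul_le_mul_of_nonneg_left k1 hc2pos.le
      nlinarith [k2, hp4]
  have hsplit : (∑' w : ℤ, c2 * (Real.exp (lam * ((w:ℝ) - x)) * P S T x w
      + Real.exp (-lam * ((w:ℝ) - x)) * P S T x w)) =
      c2 * ((∑' w : ℤ, Real.exp (lam * ((w:ℝ) - x)) * P S T x w)
        + (∑' w : ℤ, Real.exp (-lam * ((w:ℝ) - x)) * P S T x w)) := by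
    rw [tsum_mul_left, Summable.tsum_add hw1 hw2]
  have hexpeq : -(lam * (ℓ:ℝ)) = -(κ * (ℓ:ℝ)) / M := by
    rw [hlam]
    field_simp
  calc (∑' w : {w : ℤ // (ℓ : ℤ) ≤ |w - x|}, P S T x (w : ℤ))
      ≤ ∑' w : ℤ, c2 * (Real.exp (lam * ((w:ℝ) - x)) * P S T x w
        + Real.exp (-lam * ((w:ℝ) - x)) * P S T x w) := htail
    _ = c2 * ((∑' w : ℤ, Real.exp (lam * ((w:ℝ) - x)) * P S T x w)
        + (∑' w : ℤ, Real.exp (-lam * ((w:ℝ) - x)) * P S T x w)) := hsplit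
    _ ≤ c2 * (2 * Real.exp (κ^2 * Real.exp κ / 2)) := by
        apply mul_le_mul_of_nonneg_left _ hc2pos.le
        linarith [hFp, hFm]
    _ = (2 * Real.exp (κ^2 * Real.exp κ / 2)) * Real.exp (-(κ * (ℓ:ℝ)) / M) := by
        rw [hc2, hexpeq]
        ring
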